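/- arXiv:2505.18327 — 5 statements merged into one kernel-verified Lean document; each statement's English description precedes it below -/
import Mathlib

section
/- Let $K$ be a symmetric invertible matrix, $g$ a vector, and $z^* = -K^{-1} g$ the exact solution of $Kz = -g$. Let $S$ be a matrix of compatible dimensions. Then the minimizer $z'$ of $\|z - z_0\|^2$ over all $z$ satisfying $S^\top K z = -S^\top g$ is given by the closed form $z' = z_0 - K S (S^\top K^2 S)^{\dagger} S^\top (K z_0 + g)$, and it satisfies $z' - z^* = (I - KS(S^\top K^2 S)^{\dagger} S^\top K)(z_0 - z^*)$. -/
open Matrix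
open scoped Matrix.Norms.L2Operator

/-- `B` is the Moore–Penrose pseudoinverse of `A` (the four Penrose conditions). -/
def IsMoorePenrose {m n : Type*} [Fintype m] [Fintype n]
    (A : Matrix m n ℝ) (B : Matrix n m ℝ) : Prop :=
  A * B * A = A ∧ B * A * B = B ∧ (A * B)ᵀ = A * B ∧ (B * A)ᵀ = B * A

/-- The closed-form solution of the sketched projection step: `z'` solves the sketched
system `Sᵀ K z = -Sᵀ g`, minimizes `‖z - z₀‖²` among all solutions, and satisfies
`z' - z⋆ = (I - K S (Sᵀ K² S)† Sᵀ K)(z₀ - z⋆)` where `z⋆ = -K⁻¹ g`. -/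
theorem sketched_projection_step {n q : ℕ}
    (K : Matrix (Fin n) (Fin n) ℝ) (hKsym : K.IsSymm) (hKinv : IsUnit K)
    (g z₀ : Fin n → ℝ) (S : Matrix (Fin n) (Fin q) ℝ)
    (B : Matrix (Fin q) (Fin q) ℝ) (hB : IsMoorePenrose (Sᵀ * K ^ 2 * S) B)
    (zstar : Fin n → ℝ) (hzstar : zstar = -(K⁻¹ *ᵥ g))
    (z' : Fin n → ℝ)
    (hz' : z' = z₀ - (K * S * B * Sᵀ) *ᵥ (K *ᵥ z₀ + g)) :
    Sᵀ *ᵥ (K *ᵥ z') = -(Sᵀ *ᵥ g) ∧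
    (∀ z : Fin n → ℝ, Sᵀ *ᵥ (K *ᵥ z) = -(Sᵀ *ᵥ g) →
      ∑ i, (z' i - z₀ i) ^ 2 ≤ ∑ i, (z i - z₀ i) ^ 2) ∧
    z' - zstar = ((1 : Matrix (Fin n) (Fin n) ℝ) - K * S * B * Sᵀ * K) *ᵥ (z₀ - zstar) := by
  obtain ⟨h1, h2, h3, h4⟩ := hB
  have hKt : Kᵀ = K := hKsym
  set M : Matrix (Fin q) (Fin q) ℝ := Sᵀ * K ^ 2 * S with hM
  have hMt : Mᵀ = M := by
    simp [hM, Matrix.transpose_mul, hKt, pow_two, Matrix.mul_assoc]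
  have hAA : (Sᵀ * K) * (K * S) = M := by
    simp [hM, pow_two, Matrix.mul_assoc]
  -- key identity : M * B * (Sᵀ * K) = Sᵀ * K
  have key : M * B * (Sᵀ * K) = Sᵀ * K := by
    set C : Matrix (Fin q) (Fin n) ℝ := Sᵀ * K - M * B * (Sᵀ * K) with hCdef
    have hC : C * Cᴴ = 0 := by
      have hCT : Cᴴ = Cᵀ := by
        ext i j; simp [Matrix.conjTranspose_apply]
      have hCH : Cᵀ = K * S - K * S * Bᵀ * M := by
        simp [hCdef, Matrix.transpose_sub, Matrix.transpose_mul, hKt, hMt,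
          Matrix.mul_assoc]
      rw [hCT, hCH, hCdef]
      have hAA' : Sᵀ * K * K * S = M := by
        rw [hM, pow_two, Matrix.mul_assoc Sᵀ, ← Matrix.mul_assoc]
      simp only [Matrix.sub_mul, Matrix.mul_sub, ← Matrix.mul_assoc]
      have e : M * B * Sᵀ * K * K * S = M := by
        calc M * B * Sᵀ * K * K * S = M * B * (Sᵀ * K * K * S) := by
              simp only [Matrix.mul_assoc]
          _ = M * B * M := by rw [hAA']
          _ = M := h1
      rw [hAA', e]
      abel
    have hC0 : C = 0 := Matrix.self_mul_conjTranspose_eq_zero.mp hC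
    exact (sub_eq_zero.mp hC0).symm
  -- z⋆ satisfies K z⋆ = -g
  have hKd : IsUnit K.det := (Matrix.isUnit_iff_isUnit_det K).mp hKinv
  have hKzstar : K *ᵥ zstar = -g := by
    rw [hzstar, Matrix.mulVec_neg, Matrix.mulVec_mulVec, Matrix.mul_nonsing_inv K hKd,
      Matrix.one_mulVec]
  have hw : K *ᵥ (z₀ - zstar) = K *ᵥ z₀ + g := by
    rw [Matrix.mulVec_sub, hKzstar]
    simp [sub_neg_eq_add]
  have hz'w : z' = z₀ - (K * S * B * Sᵀ * K) *ᵥ (z₀ - zstar) := by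
    rw [hz', ← hw, Matrix.mulVec_mulVec]
  have keymat : (Sᵀ * K) * (K * S * B * Sᵀ * K) = Sᵀ * K := by
    calc (Sᵀ * K) * (K * S * B * Sᵀ * K) = ((Sᵀ * K) * (K * S)) * B * (Sᵀ * K) := by
          simp only [Matrix.mul_assoc]
      _ = M * B * (Sᵀ * K) := by rw [hAA]
      _ = Sᵀ * K := key
  -- Part 1
  have part1 : Sᵀ *ᵥ (K *ᵥ z') = -(Sᵀ *ᵥ g) := by
    rw [hz'w, Matrix.mulVec_mulVec, Matrix.mulVec_sub, Matrix.mulVec_mulVec, keymat]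
    have hSKw : (Sᵀ * K) *ᵥ (z₀ - zstar) = (Sᵀ * K) *ᵥ z₀ + Sᵀ *ᵥ g := by
      rw [← Matrix.mulVec_mulVec, hw, Matrix.mulVec_add, Matrix.mulVec_mulVec]
    rw [hSKw]
    abel
  refine ⟨part1, ?_, ?_⟩
  · -- minimality
    intro z hz
    have hSKz : (Sᵀ * K) *ᵥ (z - z') = 0 := by
      rw [Matrix.mulVec_sub, ← Matrix.mulVec_mulVec, ← Matrix.mulVec_mulVec, hz, part1]
      simp
    have hz'z₀ : z' - z₀ = -((K * S) *ᵥ ((B * Sᵀ * K) *ᵥ (z₀ - zstar))) := by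
      rw [hz'w, Matrix.mulVec_mulVec]
      have : K * S * (B * Sᵀ * K) = K * S * B * Sᵀ * K := by
        simp only [Matrix.mul_assoc]
      rw [this]
      ext i
      simp [Pi.sub_apply]
    have cross : ∑ i, (z i - z' i) * (z' i - z₀ i) = 0 := by
      have hdp : ∑ i, (z i - z' i) * (z' i - z₀ i) = (z - z') ⬝ᵥ (z' - z₀) := by
        simp [dotProduct, Pi.sub_apply]
      rw [hdp, hz'z₀, dotProduct_neg, Matrix.dotProduct_mulVec,
        ← Matrix.mulVec_transpose]
      have : (K * S)ᵀ = Sᵀ * K := by rw [Matrix.transpose_mul, hKt]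
      rw [this, hSKz]
      simp
    have hsplit : ∑ i, (z i - z₀ i) ^ 2
        = ∑ i, (z i - z' i) ^ 2 + 2 * ∑ i, (z i - z' i) * (z' i - z₀ i)
          + ∑ i, (z' i - z₀ i) ^ 2 := by
      rw [Finset.mul_sum, ← Finset.sum_add_distrib, ← Finset.sum_add_distrib]
      congr 1
      ext i
      ring
    rw [hsplit, cross]
    have hnn : (0:ℝ) ≤ ∑ i, (z i - z' i) ^ 2 := Finset.sum_nonneg fun i _ => sq_nonneg _
    linarith
  · -- Part 3
    rw [hz'w, Matrix.sub_mulVec, Matrix.one_mulVec]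
    ext i
    simp [Pi.sub_apply]
    ring
end

section
/- Let $C^\star$ and $\widetilde{C}^\star$ be as follows: $\widetilde{C}^\star$ is a random matrix with $\mathbb{E}[\widetilde{C}^\star] = C^\star$, $\|C^\star\| \leq \rho^\tau < 1$ for some $\rho \in [0,1)$ and integer $\tau \geq 1$, and $\|\mathbb{E}[\widetilde{C}^\star \Xi^\star (\widetilde{C}^\star)^\top]\| \leq \rho^\tau \|\Xi^\star\|$ for a positive semidefinite matrix $\Xi^\star$. Define $\bar{\Xi}^\star = (I - C^\star)^{-1} \mathbb{E}[(I - \widetilde{C}^\star) \Xi^\star (I - \widetilde{C}^\star)^\top] (I - C^\star)^{-1}$. Then $\bar{\Xi}^\star \succeq \Xi^\star$ and $\|\bar{\Xi}^\star - \Xi^\star\| \leq \frac{(1 + \rho^\tau)\rho^\tau}{(1 - \rho^\tau)^2} \|\Xi^\star\|$. -/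
open Matrix MeasureTheory
open scoped Matrix.Norms.L2Operator

instance matrixMeasurableSpace {m n : Type*} : MeasurableSpace (Matrix m n ℝ) :=
  inferInstanceAs (MeasurableSpace (m → n → ℝ))

/-- The (entrywise) expectation of a random matrix. -/
noncomputable def matExp {Ω : Type*} [MeasurableSpace Ω] (μ : Measure Ω)
    {m n : Type*} (f : Ω → Matrix m n ℝ) : Matrix m n ℝ :=
  Matrix.of fun i j => ∫ ω, f ω i j ∂μ

section helpers
variable {Ω : Type*} [MeasurableSpace Ω] {μ : Measure Ω} {n : ℕ}
  {f g : Ω → Matrix (Fin n) (Fin n) ℝ}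

lemma matExp_apply (f : Ω → Matrix (Fin n) (Fin n) ℝ) (i j : Fin n) :
    matExp μ f i j = ∫ ω, f ω i j ∂μ := rfl

lemma integrable_mulR (hf : ∀ i j, Integrable (fun ω => f ω i j) μ)
    (K : Matrix (Fin n) (Fin n) ℝ) (i j : Fin n) :
    Integrable (fun ω => (f ω * K) i j) μ := by
  simp only [Matrix.mul_apply]
  exact integrable_finset_sum _ fun k _ => (hf i k).mul_const _

lemma integrable_mulL (hf : ∀ i j, Integrable (fun ω => f ω i j) μ)
    (K : Matrix (Fin n) (Fin n) ℝ) (i j : Fin n) :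
    Integrable (fun ω => (K * f ω) i j) μ := by
  simp only [Matrix.mul_apply]
  exact integrable_finset_sum _ fun k _ => (hf k j).const_mul _

lemma matExp_mulR (hf : ∀ i j, Integrable (fun ω => f ω i j) μ)
    (K : Matrix (Fin n) (Fin n) ℝ) :
    matExp μ (fun ω => f ω * K) = matExp μ f * K := by
  ext i j
  simp only [matExp_apply, Matrix.mul_apply]
  rw [integral_finset_sum _ fun k _ => (hf i k).mul_const _]
  simp [integral_mul_const, matExp_apply]

lemma matExp_mulL (hf : ∀ i j, Integrable (fun ω => f ω i j) μ)
    (K : Matrix (Fin n) (Fin n) ℝ) :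
    matExp μ (fun ω => K * f ω) = K * matExp μ f := by
  ext i j
  simp only [matExp_apply, Matrix.mul_apply]
  rw [integral_finset_sum _ fun k _ => (hf k j).const_mul _]
  simp [integral_const_mul, matExp_apply]

lemma matExp_sub (hf : ∀ i j, Integrable (fun ω => f ω i j) μ)
    (hg : ∀ i j, Integrable (fun ω => g ω i j) μ) :
    matExp μ (fun ω => f ω - g ω) = matExp μ f - matExp μ g := by
  ext i j
  simp only [matExp_apply, Matrix.sub_apply]
  exact integral_sub (hf i j) (hg i j)

lemma matExp_transpose (f : Ω → Matrix (Fin n) (Fin n) ℝ) :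
    matExp μ (fun ω => (f ω)ᵀ) = (matExp μ f)ᵀ := by
  ext i j; simp [matExp_apply]

end helpers



set_option maxHeartbeats 1000000

/-- If `𝔼[C̃⋆] = C⋆` (symmetric, as it is the expectation of products of i.i.d. projections),
`‖C⋆‖ ≤ ρ^τ < 1`, and `‖𝔼[C̃⋆ Ξ⋆ C̃⋆ᵀ]‖ ≤ ρ^τ ‖Ξ⋆‖` for a positive semidefinite `Ξ⋆`, then
`Ξ̄⋆ = (I - C⋆)⁻¹ 𝔼[(I - C̃⋆) Ξ⋆ (I - C̃⋆)ᵀ] (I - C⋆)⁻¹` satisfies `Ξ̄⋆ ⪰ Ξ⋆` and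
`‖Ξ̄⋆ - Ξ⋆‖ ≤ (1 + ρ^τ) ρ^τ / (1 - ρ^τ)² ⬝ ‖Ξ⋆‖`. -/
theorem averaged_covariance_efficiency {Ω : Type*} [MeasurableSpace Ω]
    (μ : Measure Ω) [IsProbabilityMeasure μ] {n : ℕ}
    (Ctil : Ω → Matrix (Fin n) (Fin n) ℝ) (hmeas : Measurable Ctil)
    (Cstar : Matrix (Fin n) (Fin n) ℝ) (hCsym : Cstar.IsSymm)
    (hE : matExp μ Ctil = Cstar)
    (ρ : ℝ) (hρ0 : 0 ≤ ρ) (hρ1 : ρ < 1) (τ : ℕ) (hτ : 1 ≤ τ)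
    (hCnorm : ‖Cstar‖ ≤ ρ ^ τ)
    (Ξ : Matrix (Fin n) (Fin n) ℝ) (hΞ : Ξ.PosSemidef)
    (hint1 : ∀ i j, Integrable (fun ω => Ctil ω i j) μ)
    (hint2 : ∀ i j, Integrable (fun ω => (Ctil ω * Ξ * (Ctil ω)ᵀ) i j) μ)
    (hquad : ‖matExp μ (fun ω => Ctil ω * Ξ * (Ctil ω)ᵀ)‖ ≤ ρ ^ τ * ‖Ξ‖)
    (Ξbar : Matrix (Fin n) (Fin n) ℝ)
    (hΞbar : Ξbar = ((1 : Matrix (Fin n) (Fin n) ℝ) - Cstar)⁻¹ *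
      matExp μ (fun ω => ((1 : Matrix (Fin n) (Fin n) ℝ) - Ctil ω) * Ξ *
        ((1 : Matrix (Fin n) (Fin n) ℝ) - Ctil ω)ᵀ) *
      ((1 : Matrix (Fin n) (Fin n) ℝ) - Cstar)⁻¹) :
    (Ξbar - Ξ).PosSemidef ∧
    ‖Ξbar - Ξ‖ ≤ (1 + ρ ^ τ) * ρ ^ τ / (1 - ρ ^ τ) ^ 2 * ‖Ξ‖ := by
  have hρτ : ρ ^ τ < 1 := pow_lt_one₀ hρ0 hρ1 (by omega)
  have hρτ0 : 0 ≤ ρ ^ τ := pow_nonneg hρ0 τ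
  have hCn1 : ‖Cstar‖ < 1 := lt_of_le_of_lt hCnorm hρτ
  set D : Matrix (Fin n) (Fin n) ℝ := (1 : Matrix (Fin n) (Fin n) ℝ) - Cstar with hD
  have hDu : IsUnit D := isUnit_one_sub_of_norm_lt_one hCn1
  have hDdet : IsUnit D.det := (Matrix.isUnit_iff_isUnit_det D).mp hDu
  have hDinv_mul : D⁻¹ * D = 1 := Matrix.nonsing_inv_mul D hDdet
  have hmul_Dinv : D * D⁻¹ = 1 := Matrix.mul_nonsing_inv D hDdet
  have hΞsym : Ξᵀ = Ξ := (by simpa using hΞ.isHermitian : Ξ.IsSymm)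
  -- integrability facts
  have hintT : ∀ i j : Fin n, Integrable (fun ω => (Ctil ω)ᵀ i j) μ := fun i j => hint1 j i
  have hI_CXi : ∀ i j, Integrable (fun ω => (Ctil ω * Ξ) i j) μ := integrable_mulR hint1 Ξ
  have hI_XiCt : ∀ i j, Integrable (fun ω => (Ξ * (Ctil ω)ᵀ) i j) μ := integrable_mulL hintT Ξ
  set Q := matExp μ (fun ω => Ctil ω * Ξ * (Ctil ω)ᵀ) with hQ
  -- expectations of cross terms
  have hE_CXi : matExp μ (fun ω => Ctil ω * Ξ) = Cstar * Ξ := by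
    rw [matExp_mulR hint1 Ξ, hE]
  have hE_XiCt : matExp μ (fun ω => Ξ * (Ctil ω)ᵀ) = Ξ * Cstar := by
    rw [matExp_mulL hintT Ξ, matExp_transpose, hE, hCsym]
  have hE_CXiC : matExp μ (fun ω => Ctil ω * Ξ * Cstar) = Cstar * Ξ * Cstar := by
    rw [matExp_mulR hI_CXi Cstar, hE_CXi]
  have hE_CXiCt2 : matExp μ (fun ω => Cstar * Ξ * (Ctil ω)ᵀ) = Cstar * Ξ * Cstar := by
    rw [matExp_mulL (f := fun ω => (Ctil ω)ᵀ) hintT (Cstar * Ξ), matExp_transpose, hE, hCsym]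
  have hconst : matExp μ (fun _ : Ω => Cstar * Ξ * Cstar) = Cstar * Ξ * Cstar := by
    ext i j; simp [matExp_apply]
  have hconstΞ : matExp μ (fun _ : Ω => Ξ) = Ξ := by
    ext i j; simp [matExp_apply]
  -- pointwise expansion of g := (Ctil - Cstar) Ξ (Ctil - Cstar)ᵀ
  have hgeq : ∀ ω, (Ctil ω - Cstar) * Ξ * (Ctil ω - Cstar)ᵀ =
      (Ctil ω * Ξ * (Ctil ω)ᵀ - Ctil ω * Ξ * Cstar) -
      (Cstar * Ξ * (Ctil ω)ᵀ - Cstar * Ξ * Cstar) := by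
    intro ω
    have : Cstarᵀ = Cstar := hCsym
    simp only [Matrix.transpose_sub, Matrix.sub_mul, Matrix.mul_sub, this]
    abel
  have hIg : ∀ i j, Integrable (fun ω => ((Ctil ω - Cstar) * Ξ * (Ctil ω - Cstar)ᵀ) i j) μ := by
    intro i j
    simp only [hgeq, Matrix.sub_apply]
    exact ((hint2 i j).sub (integrable_mulR hI_CXi Cstar i j)).sub
      ((integrable_mulL hintT (Cstar * Ξ) i j).sub (integrable_const _))
  set M := matExp μ (fun ω => (Ctil ω - Cstar) * Ξ * (Ctil ω - Cstar)ᵀ) with hM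
  have hMval : M = Q - Cstar * Ξ * Cstar := by
    rw [hM]
    have h1 : ∀ i j, Integrable
        (fun ω => (Ctil ω * Ξ * (Ctil ω)ᵀ - Ctil ω * Ξ * Cstar) i j) μ := by
      intro i j; simp only [Matrix.sub_apply]
      exact (hint2 i j).sub (integrable_mulR hI_CXi Cstar i j)
    have h2 : ∀ i j, Integrable
        (fun ω => (Cstar * Ξ * (Ctil ω)ᵀ - Cstar * Ξ * Cstar) i j) μ := by
      intro i j; simp only [Matrix.sub_apply]
      exact (integrable_mulL hintT (Cstar * Ξ) i j).sub (integrable_const _)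
    calc matExp μ (fun ω => (Ctil ω - Cstar) * Ξ * (Ctil ω - Cstar)ᵀ)
        = matExp μ (fun ω => (Ctil ω * Ξ * (Ctil ω)ᵀ - Ctil ω * Ξ * Cstar) -
            (Cstar * Ξ * (Ctil ω)ᵀ - Cstar * Ξ * Cstar)) := by simp only [hgeq]
      _ = (Q - Cstar * Ξ * Cstar) - (Cstar * Ξ * Cstar - Cstar * Ξ * Cstar) := by
          rw [matExp_sub (f := fun ω => Ctil ω * Ξ * (Ctil ω)ᵀ - Ctil ω * Ξ * Cstar)
              (g := fun ω => Cstar * Ξ * (Ctil ω)ᵀ - Cstar * Ξ * Cstar) h1 h2,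
            matExp_sub (f := fun ω => Ctil ω * Ξ * (Ctil ω)ᵀ)
              (g := fun ω => Ctil ω * Ξ * Cstar) hint2 (integrable_mulR hI_CXi Cstar),
            matExp_sub (f := fun ω => Cstar * Ξ * (Ctil ω)ᵀ)
              (g := fun _ => Cstar * Ξ * Cstar) (integrable_mulL hintT (Cstar * Ξ))
              (fun i j => integrable_const _),
            hE_CXiC, hE_CXiCt2, hconst, ← hQ]
      _ = Q - Cstar * Ξ * Cstar := by abel
  -- expectation E1
  have hg1eq : ∀ ω, ((1 : Matrix (Fin n) (Fin n) ℝ) - Ctil ω) * Ξ *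
      ((1 : Matrix (Fin n) (Fin n) ℝ) - Ctil ω)ᵀ =
      (Ξ - Ξ * (Ctil ω)ᵀ) - (Ctil ω * Ξ - Ctil ω * Ξ * (Ctil ω)ᵀ) := by
    intro ω
    simp only [Matrix.transpose_sub, Matrix.transpose_one, Matrix.sub_mul, Matrix.mul_sub,
      Matrix.one_mul, Matrix.mul_one]
    abel
  have hE1 : matExp μ (fun ω => ((1 : Matrix (Fin n) (Fin n) ℝ) - Ctil ω) * Ξ *
      ((1 : Matrix (Fin n) (Fin n) ℝ) - Ctil ω)ᵀ) = (Ξ - Ξ * Cstar) - (Cstar * Ξ - Q) := by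
    have h1 : ∀ i j, Integrable (fun ω => (Ξ - Ξ * (Ctil ω)ᵀ) i j) μ := by
      intro i j; simp only [Matrix.sub_apply]
      exact (integrable_const _).sub (hI_XiCt i j)
    have h2 : ∀ i j, Integrable (fun ω => (Ctil ω * Ξ - Ctil ω * Ξ * (Ctil ω)ᵀ) i j) μ := by
      intro i j; simp only [Matrix.sub_apply]
      exact (hI_CXi i j).sub (hint2 i j)
    calc matExp μ (fun ω => ((1 : Matrix (Fin n) (Fin n) ℝ) - Ctil ω) * Ξ *
          ((1 : Matrix (Fin n) (Fin n) ℝ) - Ctil ω)ᵀ)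
        = matExp μ (fun ω => (Ξ - Ξ * (Ctil ω)ᵀ) - (Ctil ω * Ξ - Ctil ω * Ξ * (Ctil ω)ᵀ)) := by
          simp only [hg1eq]
      _ = (Ξ - Ξ * Cstar) - (Cstar * Ξ - Q) := by
          rw [matExp_sub (f := fun ω => Ξ - Ξ * (Ctil ω)ᵀ)
              (g := fun ω => Ctil ω * Ξ - Ctil ω * Ξ * (Ctil ω)ᵀ) h1 h2,
            matExp_sub (f := fun _ => Ξ) (g := fun ω => Ξ * (Ctil ω)ᵀ)
              (fun i j => integrable_const _) hI_XiCt,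
            matExp_sub (f := fun ω => Ctil ω * Ξ) (g := fun ω => Ctil ω * Ξ * (Ctil ω)ᵀ)
              hI_CXi hint2, hE_XiCt, hE_CXi, hconstΞ, ← hQ]
  have hE1M : matExp μ (fun ω => ((1 : Matrix (Fin n) (Fin n) ℝ) - Ctil ω) * Ξ *
      ((1 : Matrix (Fin n) (Fin n) ℝ) - Ctil ω)ᵀ) = D * Ξ * D + M := by
    rw [hE1, hMval, hD]
    noncomm_ring
  -- the key identity
  have hkey : Ξbar - Ξ = D⁻¹ * M * D⁻¹ := by
    have hmid : D⁻¹ * (D * Ξ * D) * D⁻¹ = Ξ := by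
      rw [Matrix.mul_assoc D Ξ D, ← Matrix.mul_assoc D⁻¹ D (Ξ * D), hDinv_mul, Matrix.one_mul,
        Matrix.mul_assoc Ξ D D⁻¹, hmul_Dinv, Matrix.mul_one]
    rw [hΞbar, hE1M, Matrix.mul_add, Matrix.add_mul, hmid]
    abel
  -- PSD of M
  have hMpsd : M.PosSemidef := by
    rw [Matrix.posSemidef_iff_dotProduct_mulVec]
    constructor
    · show Mᴴ = M
      ext i j
      simp only [Matrix.conjTranspose_apply, star_trivial]
      rw [hM, matExp_apply, matExp_apply]
      congr 1; funext ω
      have hsym : ((Ctil ω - Cstar) * Ξ * (Ctil ω - Cstar)ᵀ)ᵀ =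
          (Ctil ω - Cstar) * Ξ * (Ctil ω - Cstar)ᵀ := by
        rw [Matrix.transpose_mul, Matrix.transpose_mul, Matrix.transpose_transpose, hΞsym,
          Matrix.mul_assoc]
      conv_lhs => rw [← hsym]
      rfl
    · intro x
      have hps : ∀ ω, ((Ctil ω - Cstar) * Ξ * (Ctil ω - Cstar)ᵀ).PosSemidef := by
        intro ω
        have := hΞ.mul_mul_conjTranspose_same (Ctil ω - Cstar)
        simpa using this
      have key : star x ⬝ᵥ M *ᵥ x =
          ∫ ω, star x ⬝ᵥ ((Ctil ω - Cstar) * Ξ * (Ctil ω - Cstar)ᵀ) *ᵥ x ∂μ := by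
        simp only [dotProduct, Matrix.mulVec, dotProduct, star_trivial]
        symm
        rw [integral_finset_sum _ (fun i _ =>
          (integrable_finset_sum _ fun j _ => (hIg i j).mul_const _).const_mul _)]
        refine Finset.sum_congr rfl fun i _ => ?_
        rw [integral_const_mul, integral_finset_sum _ (fun j _ => (hIg i j).mul_const _)]
        congr 1
        refine Finset.sum_congr rfl fun j _ => ?_
        rw [integral_mul_const, hM, matExp_apply]
      rw [key]
      exact integral_nonneg fun ω => (hps ω).dotProduct_mulVec_nonneg x
  have hdiffpsd : (Ξbar - Ξ).PosSemidef := by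
    rw [hkey]
    have hDit : (D⁻¹)ᵀ = D⁻¹ := by
      rw [Matrix.transpose_nonsing_inv]
      congr 1
      rw [hD, Matrix.transpose_sub, Matrix.transpose_one, hCsym]
    have := hMpsd.mul_mul_conjTranspose_same D⁻¹
    simp only [Matrix.conjTranspose] at this
    simpa [hDit, show D⁻¹.map (starRingEnd ℝ) = D⁻¹ from by ext i j; simp] using this
  refine ⟨hdiffpsd, ?_⟩
  -- norm bound
  have hnorm1 : ‖(1 : Matrix (Fin n) (Fin n) ℝ)‖ ≤ 1 := by
    have h1 : (toEuclideanCLM (n := Fin n) (𝕜 := ℝ)) 1 = 1 := _root_.map_one _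
    rw [Matrix.cstar_norm_def, h1, ContinuousLinearMap.one_def]
    exact ContinuousLinearMap.norm_id_le
  have hDinvid : D⁻¹ = 1 + Cstar * D⁻¹ := by
    have h1 : D⁻¹ - Cstar * D⁻¹ = 1 := by
      have : (1 - Cstar) * D⁻¹ = 1 := by rw [← hD]; exact hmul_Dinv
      rwa [Matrix.sub_mul, Matrix.one_mul] at this
    rw [← h1]; abel
  have hDinv0 : 0 ≤ ‖D⁻¹‖ := norm_nonneg _
  have hDinvnorm : ‖D⁻¹‖ * (1 - ρ ^ τ) ≤ 1 := by
    have h2 : ‖D⁻¹‖ ≤ 1 + ρ ^ τ * ‖D⁻¹‖ := by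
      calc ‖D⁻¹‖ = ‖(1 : Matrix (Fin n) (Fin n) ℝ) + Cstar * D⁻¹‖ := by rw [← hDinvid]
        _ ≤ ‖(1 : Matrix (Fin n) (Fin n) ℝ)‖ + ‖Cstar * D⁻¹‖ := norm_add_le _ _
        _ ≤ 1 + ‖Cstar‖ * ‖D⁻¹‖ := by
            gcongr
            exact norm_mul_le _ _
        _ ≤ 1 + ρ ^ τ * ‖D⁻¹‖ := by gcongr
    nlinarith
  have hMnorm : ‖M‖ ≤ (1 + ρ ^ τ) * ρ ^ τ * ‖Ξ‖ := by
    have hΞ0 : 0 ≤ ‖Ξ‖ := norm_nonneg _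
    calc ‖M‖ = ‖Q - Cstar * Ξ * Cstar‖ := by rw [hMval]
      _ ≤ ‖Q‖ + ‖Cstar * Ξ * Cstar‖ := norm_sub_le _ _
      _ ≤ ρ ^ τ * ‖Ξ‖ + ρ ^ τ * ‖Ξ‖ * ρ ^ τ := by
          refine add_le_add hquad ?_
          calc ‖Cstar * Ξ * Cstar‖ ≤ ‖Cstar * Ξ‖ * ‖Cstar‖ := norm_mul_le _ _
            _ ≤ ‖Cstar‖ * ‖Ξ‖ * ‖Cstar‖ := by
                have h := norm_mul_le Cstar Ξ
                have := norm_nonneg Cstar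
                nlinarith [norm_nonneg (Cstar * Ξ)]
            _ ≤ ρ ^ τ * ‖Ξ‖ * ρ ^ τ := by
                have h0 := norm_nonneg Cstar
                have h1 := norm_nonneg Ξ
                nlinarith [mul_le_mul hCnorm hCnorm h0 hρτ0, hΞ0]
      _ = (1 + ρ ^ τ) * ρ ^ τ * ‖Ξ‖ := by ring
  have hfinal : ‖Ξbar - Ξ‖ ≤ ‖D⁻¹‖ * ‖M‖ * ‖D⁻¹‖ := by
    rw [hkey]
    calc ‖D⁻¹ * M * D⁻¹‖ ≤ ‖D⁻¹ * M‖ * ‖D⁻¹‖ := norm_mul_le _ _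
      _ ≤ ‖D⁻¹‖ * ‖M‖ * ‖D⁻¹‖ := by gcongr; exact norm_mul_le _ _
  have hpos : 0 < 1 - ρ ^ τ := by linarith
  have hM0 : 0 ≤ ‖M‖ := norm_nonneg _
  have hΞ0 : 0 ≤ ‖Ξ‖ := norm_nonneg _
  have hsq : (‖D⁻¹‖ * (1 - ρ ^ τ)) ^ 2 ≤ 1 := by
    nlinarith [mul_nonneg hDinv0 hpos.le]
  have hb : ‖Ξbar - Ξ‖ * (1 - ρ ^ τ) ^ 2 ≤ (1 + ρ ^ τ) * ρ ^ τ * ‖Ξ‖ := by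
    calc ‖Ξbar - Ξ‖ * (1 - ρ ^ τ) ^ 2
        ≤ (‖D⁻¹‖ * ‖M‖ * ‖D⁻¹‖) * (1 - ρ ^ τ) ^ 2 :=
          mul_le_mul_of_nonneg_right hfinal (sq_nonneg _)
      _ = (‖D⁻¹‖ * (1 - ρ ^ τ)) ^ 2 * ‖M‖ := by ring
      _ ≤ 1 * ‖M‖ := mul_le_mul_of_nonneg_right hsq hM0
      _ = ‖M‖ := one_mul _
      _ ≤ (1 + ρ ^ τ) * ρ ^ τ * ‖Ξ‖ := hMnorm
  rw [div_mul_eq_mul_div, le_div_iff₀ (by positivity)]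
  linarith [hb]
end

section
/- Let $C^\star$ be a symmetric matrix with $\|C^\star\| \leq \rho^\tau < 1/2$, let $M = \mathbb{E}[(I - \widetilde{C}^\star)\Xi^\star(I - \widetilde{C}^\star)^\top]$ be positive semidefinite, let $\bar{\Xi}^\star = (I - C^\star)^{-1} M (I - C^\star)^{-1}$, and let $\widetilde{\Xi}^\star$ be the (unique) symmetric solution of the Lyapunov equation $(\tfrac{1}{2}I - C^\star)\widetilde{\Xi}^\star + \widetilde{\Xi}^\star(\tfrac{1}{2}I - C^\star) = M$. Then $\bar{\Xi}^\star \preceq \widetilde{\Xi}^\star$. -/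
open Matrix
open scoped Matrix.Norms.L2Operator

private lemma dot_mulVec_le {n : ℕ} (C : Matrix (Fin n) (Fin n) ℝ)
    (x : EuclideanSpace ℝ (Fin n)) :
    x ⬝ᵥ (C *ᵥ x) ≤ ‖C‖ * (x ⬝ᵥ x) := by
  have h1 : (inner ℝ x ((EuclideanSpace.equiv (Fin n) ℝ).symm (C *ᵥ x)) : ℝ) ≤
      ‖x‖ * ‖(EuclideanSpace.equiv (Fin n) ℝ).symm (C *ᵥ x)‖ := real_inner_le_norm _ _
  have h2 := C.l2_opNorm_mulVec x
  have h3 : (inner ℝ x ((EuclideanSpace.equiv (Fin n) ℝ).symm (C *ᵥ x)) : ℝ) =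
      x ⬝ᵥ (C *ᵥ x) := by
    simp [PiLp.inner_apply, dotProduct, EuclideanSpace.equiv, mul_comm]
  have h4 : x ⬝ᵥ x = ‖x‖ * ‖x‖ := by
    rw [← real_inner_self_eq_norm_mul_norm, PiLp.inner_apply]
    simp [dotProduct, sq]
  rw [h3] at h1
  rw [h4]
  calc x ⬝ᵥ (C *ᵥ x) ≤ ‖x‖ * ‖(EuclideanSpace.equiv (Fin n) ℝ).symm (C *ᵥ x)‖ := h1
    _ ≤ ‖x‖ * (‖C‖ * ‖x‖) := mul_le_mul_of_nonneg_left h2 (norm_nonneg x)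
    _ = ‖C‖ * (‖x‖ * ‖x‖) := by ring

private lemma posdef_smul_one_sub {n : ℕ} {C : Matrix (Fin n) (Fin n) ℝ} (hC : C.IsSymm)
    {μ : ℝ} (h : ‖C‖ < μ) : (μ • (1 : Matrix (Fin n) (Fin n) ℝ) - C).PosDef := by
  rw [posDef_iff_dotProduct_mulVec]
  constructor
  · rw [IsHermitian, conjTranspose_eq_transpose_of_trivial, transpose_sub, transpose_smul,
      transpose_one, hC.eq]
  · intro x hx
    have hsx : star x = x := by simp
    rw [hsx, sub_mulVec, smul_mulVec, one_mulVec, dotProduct_sub, dotProduct_smul]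
    have h1 : x ⬝ᵥ (C *ᵥ x) ≤ ‖C‖ * (x ⬝ᵥ x) := dot_mulVec_le C (WithLp.toLp 2 x)
    have h2 : 0 < x ⬝ᵥ x := by
      have : x ⬝ᵥ x = ∑ i, x i * x i := rfl
      have hne : ∃ i, x i ≠ 0 := by
        by_contra hcon
        push_neg at hcon
        exact hx (funext hcon)
      obtain ⟨i, hi⟩ := hne
      rw [this]
      exact Finset.sum_pos' (fun j _ => mul_self_nonneg (x j))
        ⟨i, Finset.mem_univ i, mul_self_pos.mpr hi⟩
    simp only [smul_eq_mul]
    nlinarith [mul_pos (sub_pos.2 h) h2]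

/-- Lyapunov stability: if `B` is positive definite, `D` is Hermitian, and
`B * D + D * B` is positive semidefinite, then `D` is positive semidefinite. -/
private lemma lyapunov_psd {n : ℕ} {B D : Matrix (Fin n) (Fin n) ℝ} (hB : B.PosDef)
    (hD : D.IsHermitian) (hN : (B * D + D * B).PosSemidef) : D.PosSemidef := by
  rw [hD.posSemidef_iff_eigenvalues_nonneg]
  intro i
  set v : Fin n → ℝ := ⇑(hD.eigenvectorBasis i) with hv
  have hv0 : v ≠ 0 := by
    intro hcon
    apply hD.eigenvectorBasis.orthonormal.ne_zero i
    ext j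
    exact congrFun hcon j
  have hDv : D *ᵥ v = hD.eigenvalues i • v := hD.mulVec_eigenvectorBasis i
  have hDT : Dᵀ = D := by
    rw [← conjTranspose_eq_transpose_of_trivial, hD.eq]
  set lam := hD.eigenvalues i with hlam
  have hkey : v ⬝ᵥ ((B * D + D * B) *ᵥ v) = 2 * lam * (v ⬝ᵥ (B *ᵥ v)) := by
    rw [add_mulVec, dotProduct_add, ← mulVec_mulVec, ← mulVec_mulVec, hDv, mulVec_smul,
      dotProduct_smul]
    have hterm2 : v ⬝ᵥ (D *ᵥ (B *ᵥ v)) = lam * (v ⬝ᵥ (B *ᵥ v)) := by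
      rw [dotProduct_mulVec v D, ← mulVec_transpose, hDT, hDv, smul_dotProduct]
      simp
    rw [hterm2]
    simp [smul_eq_mul]
    ring
  have hpos : 0 < v ⬝ᵥ (B *ᵥ v) := by
    have := hB.dotProduct_mulVec_pos hv0
    simpa using this
  have hnn : 0 ≤ v ⬝ᵥ ((B * D + D * B) *ᵥ v) := by
    have := (posSemidef_iff_dotProduct_mulVec.mp hN).2 v
    simpa using this
  rw [hkey] at hnn
  show (0 : ℝ) ≤ lam
  nlinarith

/-- Comparison of the Polyak–Ruppert averaged covariance with the last-iterate covariance: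
if `C⋆` is symmetric with `‖C⋆‖ ≤ ρ^τ < 1/2`, `M` is positive semidefinite,
`Ξ̄⋆ = (I - C⋆)⁻¹ M (I - C⋆)⁻¹`, and `Ξ̃⋆` is the symmetric solution of the Lyapunov
equation `(½I - C⋆) Ξ̃⋆ + Ξ̃⋆ (½I - C⋆) = M`, then `Ξ̄⋆ ⪯ Ξ̃⋆`. -/
theorem averaged_vs_last_covariance {n : ℕ}
    (Cstar : Matrix (Fin n) (Fin n) ℝ) (hCsym : Cstar.IsSymm)
    (ρ : ℝ) (τ : ℕ) (hCnorm : ‖Cstar‖ ≤ ρ ^ τ) (hρτ : ρ ^ τ < 1/2)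
    (M : Matrix (Fin n) (Fin n) ℝ) (hM : M.PosSemidef)
    (Ξbar : Matrix (Fin n) (Fin n) ℝ)
    (hΞbar : Ξbar = ((1 : Matrix (Fin n) (Fin n) ℝ) - Cstar)⁻¹ * M *
      ((1 : Matrix (Fin n) (Fin n) ℝ) - Cstar)⁻¹)
    (Ξtil : Matrix (Fin n) (Fin n) ℝ) (hΞsym : Ξtil.IsSymm)
    (hLyap : ((1/2 : ℝ) • (1 : Matrix (Fin n) (Fin n) ℝ) - Cstar) * Ξtil +
      Ξtil * ((1/2 : ℝ) • (1 : Matrix (Fin n) (Fin n) ℝ) - Cstar) = M) :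
    (Ξtil - Ξbar).PosSemidef := by
  have hC12 : ‖Cstar‖ < 1/2 := lt_of_le_of_lt hCnorm hρτ
  set B : Matrix (Fin n) (Fin n) ℝ := (1/2 : ℝ) • (1 : Matrix (Fin n) (Fin n) ℝ) - Cstar with hBdef
  set A : Matrix (Fin n) (Fin n) ℝ := (1 : Matrix (Fin n) (Fin n) ℝ) - Cstar with hAdef
  have hB : B.PosDef := posdef_smul_one_sub hCsym (by linarith)
  have hA : A.PosDef := by
    have := posdef_smul_one_sub hCsym (show ‖Cstar‖ < 1 by linarith)
    rwa [one_smul] at this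
  have hAdet : IsUnit A.det := hA.det_pos.ne'.isUnit
  have e1 : A * A⁻¹ = 1 := mul_nonsing_inv A hAdet
  have e2 : A⁻¹ * A = 1 := nonsing_inv_mul A hAdet
  -- symmetry facts
  have hAsymm : Aᵀ = A := by rw [hAdef, transpose_sub, transpose_one, hCsym.eq]
  have hAinvsymm : (A⁻¹)ᵀ = A⁻¹ := by rw [transpose_nonsing_inv, hAsymm]
  have hMsymm : Mᵀ = M := by rw [← conjTranspose_eq_transpose_of_trivial, hM.1.eq]
  -- Ξbar is symmetric
  have hΞbarT : Ξbarᵀ = Ξbar := by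
    rw [hΞbar, transpose_mul, transpose_mul, hAinvsymm, hMsymm, mul_assoc]
  -- key algebraic identity
  have hBA : B = A - (1/2 : ℝ) • (1 : Matrix (Fin n) (Fin n) ℝ) := by
    rw [hBdef, hAdef]
    module
  set X : Matrix (Fin n) (Fin n) ℝ := A⁻¹ * M * A⁻¹ with hXdef
  have hB1 : B * Ξbar = M * A⁻¹ - (1/2 : ℝ) • X := by
    rw [hBA, hΞbar, sub_mul, smul_mul_assoc, one_mul, hXdef, ← mul_assoc, ← mul_assoc, e1,
      one_mul]
  have hB2 : Ξbar * B = A⁻¹ * M - (1/2 : ℝ) • X := by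
    rw [hBA, hΞbar, mul_sub, mul_smul_comm, mul_one, hXdef, mul_assoc, e2, mul_one]
  have hNeq : B * (Ξtil - Ξbar) + (Ξtil - Ξbar) * B =
      ((1 : Matrix (Fin n) (Fin n) ℝ) - A⁻¹) * M * ((1 : Matrix (Fin n) (Fin n) ℝ) - A⁻¹) := by
    have hsplit : B * (Ξtil - Ξbar) + (Ξtil - Ξbar) * B =
        (B * Ξtil + Ξtil * B) - (B * Ξbar + Ξbar * B) := by noncomm_ring
    have hexpand : ((1 : Matrix (Fin n) (Fin n) ℝ) - A⁻¹) * M *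
        ((1 : Matrix (Fin n) (Fin n) ℝ) - A⁻¹) = M - M * A⁻¹ - A⁻¹ * M + A⁻¹ * M * A⁻¹ := by
      noncomm_ring
    rw [hsplit, hLyap, hB1, hB2, hexpand, ← hXdef]
    module
  -- the RHS is positive semidefinite
  have hNpsd : (B * (Ξtil - Ξbar) + (Ξtil - Ξbar) * B).PosSemidef := by
    rw [hNeq]
    have := hM.mul_mul_conjTranspose_same ((1 : Matrix (Fin n) (Fin n) ℝ) - A⁻¹)
    rwa [conjTranspose_eq_transpose_of_trivial, transpose_sub, transpose_one, hAinvsymm] at this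
  -- D is Hermitian
  have hDherm : (Ξtil - Ξbar).IsHermitian := by
    rw [IsHermitian, conjTranspose_eq_transpose_of_trivial, transpose_sub, hΞsym.eq, hΞbarT]
  exact lyapunov_psd hB hDherm hNpsd
end

section
/- Let $G$ be an $m \times d$ real matrix with full row rank, let $H$ be a symmetric $d \times d$ matrix, let $K = \begin{pmatrix} H & G^\top \\ G & 0 \end{pmatrix}$ be invertible, let $\Sigma$ be a $d \times d$ positive definite matrix, and define $\Xi = K^{-1} \begin{pmatrix} \Sigma & 0 \\ 0 & 0 \end{pmatrix} K^{-1}$. Then for a vector $z \in \mathbb{R}^{d+m}$ one has $z^\top \Xi z = 0$ if and only if $z \in U_1 := \{ (G^\top u, 0) : u \in \mathbb{R}^m \}$. In particular, $z^\top \Xi z > 0$ for every $z \notin U_1$. -/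
open Matrix

/-- Degeneracy structure of the limiting covariance of the constrained `M`-estimator:
for the KKT matrix `K = [[H, Gᵀ], [G, 0]]` (invertible, `G` of full row rank, `Σ ≻ 0`) and
`Ξ = K⁻¹ diag(Σ, 0) K⁻¹`, one has `zᵀ Ξ z = 0` iff `z ∈ U₁ = {(Gᵀ u, 0) : u}`;
in particular `zᵀ Ξ z > 0` for every `z ∉ U₁`. -/
theorem constrained_covariance_kernel {d m : ℕ}
    (G : Matrix (Fin m) (Fin d) ℝ) (hG : G.rank = m)
    (H : Matrix (Fin d) (Fin d) ℝ) (hH : H.IsSymm)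
    (K : Matrix (Fin d ⊕ Fin m) (Fin d ⊕ Fin m) ℝ)
    (hK : K = Matrix.fromBlocks H Gᵀ G 0) (hKinv : IsUnit K)
    (Cov : Matrix (Fin d) (Fin d) ℝ) (hCov : Cov.PosDef)
    (Ξ : Matrix (Fin d ⊕ Fin m) (Fin d ⊕ Fin m) ℝ)
    (hΞ : Ξ = K⁻¹ * Matrix.fromBlocks Cov 0 0 0 * K⁻¹) :
    ∀ z : Fin d ⊕ Fin m → ℝ,
      (z ⬝ᵥ (Ξ *ᵥ z) = 0 ↔ ∃ u : Fin m → ℝ, z = Sum.elim (Gᵀ *ᵥ u) 0) ∧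
      ((¬ ∃ u : Fin m → ℝ, z = Sum.elim (Gᵀ *ᵥ u) 0) → 0 < z ⬝ᵥ (Ξ *ᵥ z)) := by
  have hdet : IsUnit K.det := (Matrix.isUnit_iff_isUnit_det K).mp hKinv
  have hKsymm : Kᵀ = K := by
    rw [hK, Matrix.fromBlocks_transpose, Matrix.transpose_transpose, hH.eq,
      Matrix.transpose_zero]
  have hKisymm : (K⁻¹)ᵀ = K⁻¹ := by
    rw [Matrix.transpose_nonsing_inv, hKsymm]
  intro z
  set w := K⁻¹ *ᵥ z with hw
  have hwz : K *ᵥ w = z := by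
    rw [hw, Matrix.mulVec_mulVec, Matrix.mul_nonsing_inv K hdet, Matrix.one_mulVec]
  have hwelim : w = Sum.elim (w ∘ Sum.inl) (w ∘ Sum.inr) := by
    funext i; cases i <;> rfl
  have hblock : ∀ v : Fin d ⊕ Fin m → ℝ,
      v ⬝ᵥ (Matrix.fromBlocks Cov 0 0 0 *ᵥ v) = (v ∘ Sum.inl) ⬝ᵥ (Cov *ᵥ (v ∘ Sum.inl)) := by
    intro v
    have hv : v = Sum.elim (v ∘ Sum.inl) (v ∘ Sum.inr) := by funext i; cases i <;> rfl
    conv_lhs => rw [hv]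
    rw [Matrix.fromBlocks_mulVec, sumElim_dotProduct_sumElim]
    simp
  have hquad : z ⬝ᵥ (Ξ *ᵥ z) = (w ∘ Sum.inl) ⬝ᵥ (Cov *ᵥ (w ∘ Sum.inl)) := by
    rw [hΞ, ← Matrix.mulVec_mulVec, ← Matrix.mulVec_mulVec,
      Matrix.dotProduct_mulVec z K⁻¹, ← Matrix.mulVec_transpose, hKisymm, ← hw]
    exact hblock w
  -- characterize membership in U₁
  have hmem : (∃ u : Fin m → ℝ, z = Sum.elim (Gᵀ *ᵥ u) 0) ↔ w ∘ Sum.inl = 0 := by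
    constructor
    · rintro ⟨u, rfl⟩
      have : Sum.elim (Gᵀ *ᵥ u) (0 : Fin m → ℝ) = K *ᵥ Sum.elim (0 : Fin d → ℝ) u := by
        rw [hK, Matrix.fromBlocks_mulVec]
        simp
      have hw' : w = Sum.elim (0 : Fin d → ℝ) u := by
        rw [hw, this, Matrix.mulVec_mulVec, Matrix.nonsing_inv_mul K hdet,
          Matrix.one_mulVec]
      funext i; simp [hw']
    · intro h1
      refine ⟨w ∘ Sum.inr, ?_⟩
      rw [← hwz]
      conv_lhs => rw [hwelim, h1]
      rw [hK, Matrix.fromBlocks_mulVec]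
      simp
  constructor
  · rw [hquad, hmem]
    constructor
    · intro h0
      by_contra hne
      have := hCov.dotProduct_mulVec_pos hne
      simp at this
      linarith
    · intro h1; rw [h1]; simp
  · intro hnot
    rw [hquad]
    have hne : w ∘ Sum.inl ≠ 0 := fun h => hnot (hmem.mpr h)
    have := hCov.dotProduct_mulVec_pos hne
    simpa using this
end

section
/- Let $C$ be a square matrix with $\|C\| \leq \rho^\tau$ for some $\rho \in [0,1)$ and positive integer $\tau$, let $K$ and $K^\star$ be invertible matrices with $\|K^{-1}\| \leq \Upsilon_K$ and $\|(K^\star)^{-1}\| \leq \Upsilon_K$, and let $\omega$, $\nabla\mathcal{L}$ be vectors satisfying $\|\nabla\mathcal{L} - K\omega\| \leq \|K - K^\star\| \|\omega\| + \Upsilon_L \|\omega\|^2$. Suppose $\|K - K^\star\| \leq \nu$ and $\|\omega\| \leq \nu$ with $\nu \leq \frac{1 - \rho^\tau}{4\Upsilon_K(1 + \Upsilon_L)}$. Then $-\langle (I - C) K^{-1} \nabla\mathcal{L}, \omega \rangle \leq -\frac{1 - \rho^\tau}{2} \|\omega\|^2$. -/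
open Matrix
open scoped Matrix.Norms.L2Operator RealInnerProductSpace

section aux

variable {n : ℕ}

/-- coercion to Euclidean space -/
noncomputable def eucl (x : Fin n → ℝ) : EuclideanSpace ℝ (Fin n) :=
  (EuclideanSpace.equiv (Fin n) ℝ).symm x

lemma dot_eq_inner (x y : Fin n → ℝ) : x ⬝ᵥ y = ⟪eucl x, eucl y⟫ := by
  simp [eucl, dotProduct, PiLp.inner_apply, RCLike.inner_apply, mul_comm]

lemma sqrt_dot_eq_norm (x : Fin n → ℝ) : Real.sqrt (x ⬝ᵥ x) = ‖eucl x‖ := by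
  rw [dot_eq_inner, real_inner_self_eq_norm_sq]
  exact Real.sqrt_sq (norm_nonneg _)

lemma norm_mulVec (A : Matrix (Fin n) (Fin n) ℝ) (x : Fin n → ℝ) :
    ‖eucl (A *ᵥ x)‖ ≤ ‖A‖ * ‖eucl x‖ :=
  A.l2_opNorm_mulVec (eucl x)

end aux

/-- Local one-point strong-monotonicity estimate near a KKT point: under the stated norm
bounds and with `ν ≤ (1 - ρ^τ)/(4Υ_K(1 + Υ_L))`, one has
`-⟨(I - C) K⁻¹ ∇𝓛, ω⟩ ≤ -(1 - ρ^τ)/2 ⬝ ‖ω‖²`, where `‖ω‖² = ω ⬝ᵥ ω` is the Euclidean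
norm and `⟨·,·⟩` the Euclidean inner product. -/
theorem local_monotonicity {n : ℕ}
    (C K Kstar : Matrix (Fin n) (Fin n) ℝ)
    (ρ : ℝ) (hρ : ρ ∈ Set.Ico (0 : ℝ) 1) (τ : ℕ) (hτ : 0 < τ)
    (hC : ‖C‖ ≤ ρ ^ τ)
    (hKinv : IsUnit K) (hKstarinv : IsUnit Kstar)
    (ΥK ΥL : ℝ) (hΥK : 0 < ΥK) (hΥL : 0 < ΥL)
    (hK1 : ‖K⁻¹‖ ≤ ΥK) (hK2 : ‖Kstar⁻¹‖ ≤ ΥK)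
    (ω gradL : Fin n → ℝ)
    (hgrad : Real.sqrt ((gradL - K *ᵥ ω) ⬝ᵥ (gradL - K *ᵥ ω))
      ≤ ‖K - Kstar‖ * Real.sqrt (ω ⬝ᵥ ω) + ΥL * (ω ⬝ᵥ ω))
    (ν : ℝ) (hKν : ‖K - Kstar‖ ≤ ν) (hων : Real.sqrt (ω ⬝ᵥ ω) ≤ ν)
    (hν : ν ≤ (1 - ρ ^ τ) / (4 * ΥK * (1 + ΥL))) :
    -((((1 : Matrix (Fin n) (Fin n) ℝ) - C) *ᵥ (K⁻¹ *ᵥ gradL)) ⬝ᵥ ω)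
      ≤ -((1 - ρ ^ τ) / 2) * (ω ⬝ᵥ ω) := by
  obtain ⟨hρ0, hρ1⟩ := hρ
  set e : Fin n → ℝ := K⁻¹ *ᵥ (gradL - K *ᵥ ω) with he
  have hdetK : IsUnit K.det := (Matrix.isUnit_iff_isUnit_det K).mp hKinv
  have hdec : K⁻¹ *ᵥ gradL = ω + e := by
    have h1 : gradL = K *ᵥ ω + (gradL - K *ᵥ ω) := by abel
    calc K⁻¹ *ᵥ gradL = K⁻¹ *ᵥ (K *ᵥ ω + (gradL - K *ᵥ ω)) := by rw [← h1]
      _ = K⁻¹ *ᵥ (K *ᵥ ω) + e := by rw [Matrix.mulVec_add]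
      _ = ω + e := by
          rw [Matrix.mulVec_mulVec, Matrix.nonsing_inv_mul K hdetK, Matrix.one_mulVec]
  set W := ‖eucl ω‖ with hW
  set En := ‖eucl e‖ with hEn
  rw [sqrt_dot_eq_norm] at hων
  rw [sqrt_dot_eq_norm, sqrt_dot_eq_norm] at hgrad
  have hW0 : 0 ≤ W := norm_nonneg _
  have hE0 : 0 ≤ En := norm_nonneg _
  have hdotW : ω ⬝ᵥ ω = W ^ 2 := by rw [dot_eq_inner, real_inner_self_eq_norm_sq]
  have hρτ1 : ρ ^ τ < 1 := pow_lt_one₀ hρ0 hρ1 hτ.ne'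
  -- bound on the error vector e
  have hEbound : En ≤ (1 - ρ ^ τ) / 4 * W := by
    have h1 : En ≤ ‖K⁻¹‖ * ‖eucl (gradL - K *ᵥ ω)‖ := norm_mulVec _ _
    have hD : (0 : ℝ) < 4 * ΥK * (1 + ΥL) := by positivity
    have hνD : ν * (4 * ΥK * (1 + ΥL)) ≤ 1 - ρ ^ τ := by
      have := (le_div_iff₀ hD).mp hν
      linarith
    have hKn0 : (0 : ℝ) ≤ ‖K⁻¹‖ := norm_nonneg _
    have hKKn0 : (0 : ℝ) ≤ ‖K - Kstar‖ := norm_nonneg _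
    have hν0 : 0 ≤ ν := le_trans hKKn0 hKν
    rw [hdotW] at hgrad
    have hr2 : ‖eucl (gradL - K *ᵥ ω)‖ ≤ ν * W + ΥL * (ν * W) := by
      nlinarith [mul_le_mul_of_nonneg_right hKν hW0, mul_le_mul_of_nonneg_right hων hW0]
    have h2 : En ≤ ΥK * (ν * W + ΥL * (ν * W)) :=
      le_trans h1 (mul_le_mul hK1 hr2 (norm_nonneg _) hΥK.le)
    nlinarith [mul_le_mul_of_nonneg_right hνD hW0]
  -- expand the quadratic form
  have expand : ((((1 : Matrix (Fin n) (Fin n) ℝ) - C) *ᵥ (ω + e)) ⬝ᵥ ω)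
      = ω ⬝ᵥ ω + e ⬝ᵥ ω - (C *ᵥ ω) ⬝ᵥ ω - (C *ᵥ e) ⬝ᵥ ω := by
    simp only [Matrix.sub_mulVec, Matrix.mulVec_add, Matrix.one_mulVec,
      sub_dotProduct, add_dotProduct]
    ring
  have hb1 : |(C *ᵥ ω) ⬝ᵥ ω| ≤ ρ ^ τ * W * W := by
    rw [dot_eq_inner]
    calc |⟪eucl (C *ᵥ ω), eucl ω⟫| ≤ ‖eucl (C *ᵥ ω)‖ * W := abs_real_inner_le_norm _ _
      _ ≤ (‖C‖ * W) * W := mul_le_mul_of_nonneg_right (norm_mulVec C ω) hW0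
      _ ≤ ρ ^ τ * W * W :=
          mul_le_mul_of_nonneg_right (mul_le_mul_of_nonneg_right hC hW0) hW0
  have hb2 : |e ⬝ᵥ ω| ≤ En * W := by
    rw [dot_eq_inner]; exact abs_real_inner_le_norm _ _
  have hb3 : |(C *ᵥ e) ⬝ᵥ ω| ≤ ρ ^ τ * En * W := by
    rw [dot_eq_inner]
    calc |⟪eucl (C *ᵥ e), eucl ω⟫| ≤ ‖eucl (C *ᵥ e)‖ * W := abs_real_inner_le_norm _ _
      _ ≤ (‖C‖ * En) * W := mul_le_mul_of_nonneg_right (norm_mulVec C e) hW0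
      _ ≤ ρ ^ τ * En * W :=
          mul_le_mul_of_nonneg_right (mul_le_mul_of_nonneg_right hC hE0) hW0
  rw [hdec, expand, hdotW]
  have h1 := abs_le.mp hb1
  have h2 := abs_le.mp hb2
  have h3 := abs_le.mp hb3
  have hρτ0 : (0 : ℝ) ≤ ρ ^ τ := pow_nonneg hρ0 τ
  nlinarith [mul_le_mul_of_nonneg_right hEbound hW0, mul_nonneg hE0 hW0,
    mul_nonneg (mul_nonneg hρτ0 hE0) hW0]
end
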